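/- For every real q>1, every n≥1 and every x∈[0,∞): M_{n,q}(t;x)=x and M_{n,q}(t^2;x)=x^2 + x/[n]_q. -/

import Mathlib

open scoped BigOperators

/-- The `q`-integer `[k]_q = (q^k - 1)/(q - 1)`. -/
noncomputable def qNat (q : ℝ) (k : ℕ) : ℝ := (q ^ k - 1) / (q - 1)

/-- The `q`-factorial `[k]_q! = [1]_q [2]_q ⋯ [k]_q`, with `[0]_q! = 1`. -/
noncomputable def qFactorial (q : ℝ) : ℕ → ℝ
  | 0 => 1
  | k + 1 => qFactorial q k * qNat q (k + 1)

/-- The `q`-exponential function `e_q(z) = ∑_{k=0}^∞ z^k/[k]_q!`. -/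
noncomputable def qExp (q z : ℝ) : ℝ := ∑' k : ℕ, z ^ k / qFactorial q k

/-- The `q`-Szász basis function
`s_{n,k}(q;x) = q^{-k(k-1)/2} ([n]_q^k x^k/[k]_q!) e_q(-[n]_q q^{-k} x)`. -/
noncomputable def qSzaszBasis (q : ℝ) (n k : ℕ) (x : ℝ) : ℝ :=
  (q ^ (k * (k - 1) / 2))⁻¹ * (qNat q n ^ k * x ^ k / qFactorial q k) *
    qExp q (-(qNat q n) * q ^ (-(k : ℤ)) * x)

/-- The `q`-Szász operator `M_{n,q}(f;x) = ∑_{k=0}^∞ f([k]_q/[n]_q) s_{n,k}(q;x)`. -/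
noncomputable def qSzasz (q : ℝ) (n : ℕ) (f : ℝ → ℝ) (x : ℝ) : ℝ :=
  ∑' k : ℕ, f (qNat q k / qNat q n) * qSzaszBasis q n k x

/-- The weight `w_0(x) = 1`, `w_p(x) = (1 + x^p)⁻¹` for `p ≥ 1`. -/
noncomputable def weight (p : ℕ) (x : ℝ) : ℝ := if p = 0 then 1 else (1 + x ^ p)⁻¹

/-- The weighted sup-norm `‖f‖_p = sup_{x ≥ 0} w_p(x)|f(x)|`. -/
noncomputable def wnorm (p : ℕ) (f : ℝ → ℝ) : ℝ :=
  ⨆ x : Set.Ici (0 : ℝ), weight p x.1 * |f x.1|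

/-- Membership in the space `C_p`: `f` is continuous on `[0,∞)` and `w_p f` is
uniformly continuous and bounded on `[0,∞)`. -/
def MemCp (p : ℕ) (f : ℝ → ℝ) : Prop :=
  ContinuousOn f (Set.Ici 0) ∧
  UniformContinuousOn (fun x => weight p x * f x) (Set.Ici 0) ∧
  ∃ M : ℝ, ∀ x ∈ Set.Ici (0 : ℝ), |weight p x * f x| ≤ M

/-- The second difference `Δ_h² f(x) = f(x+2h) - 2f(x+h) + f(x)`. -/
noncomputable def delta2 (f : ℝ → ℝ) (h x : ℝ) : ℝ := f (x + 2 * h) - 2 * f (x + h) + f x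

/-- The second modulus of smoothness `ω_p²(f;δ) = sup_{0<h≤δ} ‖Δ_h² f‖_p`. -/
noncomputable def omega2 (p : ℕ) (f : ℝ → ℝ) (δ : ℝ) : ℝ :=
  ⨆ h : {h : ℝ // 0 < h ∧ h ≤ δ}, wnorm p (fun x => delta2 f h.1 x)

/-- The (first) modulus of continuity on `[0,∞)`:
`ω(g;δ) = sup {|g(s)-g(t)| : s,t ≥ 0, |s-t| ≤ δ}`. -/
noncomputable def omega1 (g : ℝ → ℝ) (δ : ℝ) : ℝ :=
  sSup {d : ℝ | ∃ s t : ℝ, 0 ≤ s ∧ 0 ≤ t ∧ |s - t| ≤ δ ∧ d = |g s - g t|}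

/-- The `q`-derivative `(D_q g)(x) = (g(qx) - g(x))/((q-1)x)`. -/
noncomputable def qDeriv (q : ℝ) (g : ℝ → ℝ) (x : ℝ) : ℝ := (g (q * x) - g x) / ((q - 1) * x)

/-- The `q`-Stirling-type numbers: `S_q(0,0)=1`, `S_q(m,0)=0` for `m>0`,
`S_q(m,j)=0` for `m<j`, and `S_q(m+1,j)=[j]_q S_q(m,j) + S_q(m,j-1)`. -/
noncomputable def qStirling (q : ℝ) : ℕ → ℕ → ℝ
  | 0, 0 => 1
  | 0, _ + 1 => 0
  | _ + 1, 0 => 0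
  | m + 1, j + 1 => qNat q (j + 1) * qStirling q m (j + 1) + qStirling q m j

section Aux
variable {q : ℝ}

lemma qNat_eq_sum (hq : 1 < q) (k : ℕ) : qNat q k = ∑ i ∈ Finset.range k, q ^ i :=
  (geom_sum_eq (by linarith) k).symm

lemma qNat_nonneg (hq : 1 < q) (k : ℕ) : 0 ≤ qNat q k := by
  rw [qNat_eq_sum hq]
  exact Finset.sum_nonneg fun i _ => by positivity

lemma le_qNat (hq : 1 < q) (k : ℕ) : (k : ℝ) ≤ qNat q k := by
  rw [qNat_eq_sum hq]
  calc (k : ℝ) = ∑ _i ∈ Finset.range k, (1:ℝ) := by simp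
  _ ≤ ∑ i ∈ Finset.range k, q ^ i :=
    Finset.sum_le_sum fun i _ => one_le_pow₀ (by linarith)

lemma qNat_pos (hq : 1 < q) {k : ℕ} (hk : 0 < k) : 0 < qNat q k :=
  lt_of_lt_of_le (by exact_mod_cast hk) (le_qNat hq k)

lemma qFactorial_pos (hq : 1 < q) (k : ℕ) : 0 < qFactorial q k := by
  induction k with
  | zero => norm_num [qFactorial]
  | succ k ih => exact mul_pos ih (qNat_pos hq k.succ_pos)

lemma qFactorial_succ (k : ℕ) : qFactorial q (k+1) = qFactorial q k * qNat q (k+1) := rfl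

lemma qNat_succ (hq : 1 < q) (k : ℕ) : qNat q (k+1) = q * qNat q k + 1 := by
  unfold qNat
  have : q - 1 ≠ 0 := by linarith
  field_simp
  ring

lemma qNat_split (hq : 1 < q) (i j : ℕ) :
    qNat q (i + j) = qNat q i + q ^ i * qNat q j := by
  unfold qNat
  have : q - 1 ≠ 0 := by linarith
  field_simp
  rw [pow_add]
  ring

lemma summable_qExpTerm (hq : 1 < q) (z : ℝ) :
    Summable (fun k => z ^ k / qFactorial q k) := by
  apply summable_of_ratio_norm_eventually_le (r := 1/2) (by norm_num)
  filter_upwards [Filter.eventually_ge_atTop ⌈2 * |z|⌉₊] with k hk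
  have hfk := qFactorial_pos hq k
  have hnk := qNat_pos hq k.succ_pos
  have h2z : 2 * |z| ≤ qNat q (k+1) := by
    calc 2 * |z| ≤ (⌈2 * |z|⌉₊ : ℝ) := Nat.le_ceil _
    _ ≤ (k : ℝ) + 1 := by exact_mod_cast le_trans (Nat.cast_le.2 hk) (by norm_num)
    _ ≤ qNat q (k+1) := by exact_mod_cast le_qNat hq (k+1)
  rw [qFactorial_succ, Real.norm_eq_abs, Real.norm_eq_abs, abs_div, abs_div, pow_succ,
    abs_mul, abs_mul, abs_of_pos hfk, abs_of_pos hnk]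
  have heq : |z ^ k| * |z| / (qFactorial q k * qNat q (k+1))
      = (|z ^ k| / qFactorial q k) * (|z| / qNat q (k+1)) := by
    field_simp
  rw [heq, mul_comm (1/2 : ℝ)]
  apply mul_le_mul_of_nonneg_left _ (by positivity)
  rw [div_le_iff₀ hnk]
  linarith

end Aux

section Binom
variable {q : ℝ}

/-- triangle number helper -/
lemma tri_succ (k : ℕ) : (k+1) * ((k+1) - 1) / 2 = k * (k-1) / 2 + k :=
  Nat.triangle_succ k

lemma two_mul_tri (k : ℕ) : 2 * (k * (k-1) / 2) = k * (k-1) := by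
  apply Nat.two_mul_div_two_of_even
  rcases Nat.even_or_odd k with h | h
  · exact h.mul_right _
  · rcases k with _ | k
    · simp
    · simpa using (Nat.Odd.sub_odd h odd_one).mul_left (k+1)

/-- the q-binomial coefficient as a quotient of q-factorials, 0 above the diagonal -/
noncomputable def qBinom (q : ℝ) (m k : ℕ) : ℝ :=
  if k ≤ m then qFactorial q m / (qFactorial q k * qFactorial q (m - k)) else 0

lemma qBinom_zero (hq : 1 < q) (m : ℕ) : qBinom q m 0 = 1 := by
  rw [qBinom, if_pos (Nat.zero_le m)]
  simp only [Nat.sub_zero, show qFactorial q 0 = 1 from rfl, one_mul]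
  exact div_self (qFactorial_pos hq m).ne'

lemma qBinom_self (hq : 1 < q) (m : ℕ) : qBinom q m m = 1 := by
  rw [qBinom, if_pos le_rfl]
  simp only [Nat.sub_self, show qFactorial q 0 = 1 from rfl, mul_one]
  exact div_self (qFactorial_pos hq m).ne'

lemma qBinom_pascal (hq : 1 < q) (m j : ℕ) :
    qBinom q (m+1) (j+1) = qBinom q m (j+1) + q ^ (m-j) * qBinom q m j := by
  rcases le_or_gt (j+1) m with h | h
  · -- j+1 ≤ m
    have hj : j ≤ m := le_trans (Nat.le_succ j) h
    rw [qBinom, qBinom, qBinom, if_pos (by omega), if_pos h, if_pos hj]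
    have h1 : m + 1 - (j+1) = m - j := by omega
    have h2 : m - j = (m - (j+1)) + 1 := by omega
    have key : qNat q (m+1) = qNat q (m-j) + q ^ (m-j) * qNat q (j+1) := by
      have := qNat_split hq (m-j) (j+1)
      rwa [show m - j + (j+1) = m + 1 by omega] at this
    rw [h1, qFactorial_succ m, h2, qFactorial_succ (m - (j+1))]
    rw [← h2, key]
    have f1 := (qFactorial_pos hq (j+1)).ne'
    have f2 := (qFactorial_pos hq (m - (j+1))).ne'
    have f3 := (qNat_pos hq (show 0 < m - j by omega)).ne'
    have f4 := (qNat_pos hq (j.succ_pos)).ne'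
    have f5 := (qFactorial_pos hq j).ne'
    rw [qFactorial_succ j]
    field_simp
  · -- j + 1 > m : cases j = m or j > m
    rcases Nat.lt_or_ge j m with h' | h'
    · omega
    rcases Nat.eq_or_lt_of_le h' with rfl | h''
    · rw [qBinom_self hq, qBinom, if_neg (by omega), qBinom_self hq]
      simp
    · rw [qBinom, qBinom, qBinom, if_neg (by omega), if_neg (by omega), if_neg (by omega)]
      simp

lemma sum_qBinom_eq_prod (hq : 1 < q) (m : ℕ) (t : ℝ) :
    ∑ k ∈ Finset.range (m+1), (-1)^k * q ^ (k * (k-1) / 2) * t ^ k * qBinom q m k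
      = ∏ i ∈ Finset.range m, (1 - q ^ i * t) := by
  induction m with
  | zero => simp [qBinom_zero hq]
  | succ m ih =>
    rw [Finset.prod_range_succ, ← ih, mul_comm, sub_mul, one_mul, Finset.mul_sum]
    have hext : ∀ s : ℝ, ∑ k ∈ Finset.range (m+1), (-1)^k * q ^ (k * (k-1) / 2) * s ^ k * qBinom q m k
        = ∑ k ∈ Finset.range (m+2), (-1)^k * q ^ (k * (k-1) / 2) * s ^ k * qBinom q m k := by
      intro s
      rw [Finset.sum_range_succ (n := m+1), qBinom, if_neg (by omega)]
      simp
    rw [hext t]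
    rw [Finset.sum_range_succ' _ (m+1), Finset.sum_range_succ' _ (m+1)]
    simp only [qBinom_pascal hq m, mul_add]
    rw [Finset.sum_add_distrib]
    have h0 : ((-1:ℝ))^0 * q ^ (0 * (0-1) / 2) * t ^ 0 * qBinom q (m+1) 0
        = (-1:ℝ)^0 * q ^ (0 * (0-1) / 2) * t ^ 0 * qBinom q m 0 := by
      rw [qBinom_zero hq, qBinom_zero hq]
    rw [h0]
    have h2 : ∀ j ∈ Finset.range (m+1),
        (-1:ℝ)^(j+1) * q ^ ((j+1) * ((j+1)-1) / 2) * t ^ (j+1) * (q ^ (m-j) * qBinom q m j)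
        = -(q ^ m * t * ((-1)^j * q ^ (j * (j-1) / 2) * t ^ j * qBinom q m j)) := by
      intro j hj
      have hjm : j ≤ m := Nat.lt_succ_iff.mp (Finset.mem_range.mp hj)
      rw [tri_succ j]
      have hp : q ^ (j * (j-1)/2 + j) * q ^ (m - j) = q ^ m * q ^ (j * (j-1)/2) := by
        rw [← pow_add, ← pow_add]
        congr 1
        omega
      rw [pow_succ (-1:ℝ), pow_succ t]
      linear_combination ((-1:ℝ)^j * -1 * t^j * t * qBinom q m j) * hp
    rw [Finset.sum_congr rfl h2, Finset.sum_neg_distrib, ← Finset.mul_sum]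
    ring

end Binom

section Core
variable {q : ℝ}

lemma sum_qBinom_eval_zero (hq : 1 < q) {m : ℕ} (hm : 1 ≤ m) :
    ∑ k ∈ Finset.range (m+1),
      (-1)^k * q ^ (k*(k-1)/2) * ((q ^ (m-1))⁻¹)^k * qBinom q m k = 0 := by
  rw [sum_qBinom_eq_prod hq]
  apply Finset.prod_eq_zero (Finset.mem_range.mpr (show m-1 < m by omega))
  rw [mul_inv_cancel₀ (by positivity : (q:ℝ) ^ (m-1) ≠ 0)]
  ring

/-- summand of the q-Szász partition of unity -/
noncomputable def qsTerm (q a x : ℝ) (k : ℕ) : ℝ :=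
  (q ^ (k * (k - 1) / 2))⁻¹ * (a ^ k * x ^ k / qFactorial q k) *
    qExp q (-a * q ^ (-(k:ℤ)) * x)

/-- double-indexed expansion of `qsTerm` -/
noncomputable def qsF (q a x : ℝ) (p : ℕ × ℕ) : ℝ :=
  (q ^ (p.1 * (p.1 - 1) / 2))⁻¹ * (a ^ p.1 * x ^ p.1 / qFactorial q p.1) *
    ((-a * q ^ (-(p.1:ℤ)) * x) ^ p.2 / qFactorial q p.2)

lemma summable_qsF (hq : 1 < q) (a x : ℝ) : Summable (qsF q a x) := by
  have hq0 : (0:ℝ) < q := by linarith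
  set z := |a * x| with hz
  have hg : Summable (fun k => z ^ k / qFactorial q k) := summable_qExpTerm hq z
  have hprod : Summable (fun p : ℕ × ℕ =>
      (z ^ p.1 / qFactorial q p.1) * (z ^ p.2 / qFactorial q p.2)) :=
    hg.mul_of_nonneg hg (fun k => div_nonneg (by positivity) (qFactorial_pos hq k).le)
      (fun k => div_nonneg (by positivity) (qFactorial_pos hq k).le)
  rw [← summable_abs_iff]
  apply hprod.of_nonneg_of_le (fun p => abs_nonneg _)
  rintro ⟨k, j⟩
  have hw0 : (0:ℝ) < q ^ (-(k:ℤ)) := zpow_pos hq0 _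
  have hw1 : q ^ (-(k:ℤ)) ≤ 1 := by
    rw [zpow_neg, zpow_natCast]
    exact inv_le_one_of_one_le₀ (one_le_pow₀ hq.le)
  have e : |qsF q a x (k, j)| =
      (q ^ (k * (k-1) / 2))⁻¹ * (z ^ k / qFactorial q k) *
        ((z * q ^ (-(k:ℤ))) ^ j / qFactorial q j) := by
    simp only [qsF, abs_mul, abs_inv, abs_div, abs_pow, abs_neg, abs_of_pos hq0,
      abs_of_pos hw0, abs_of_pos (qFactorial_pos hq k), abs_of_pos (qFactorial_pos hq j),
      hz, abs_mul]
    ring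
  rw [e]
  have h1 : (q ^ (k * (k-1) / 2) : ℝ)⁻¹ ≤ 1 := inv_le_one_of_one_le₀ (one_le_pow₀ hq.le)
  have hzk : (0:ℝ) ≤ z ^ k / qFactorial q k :=
    div_nonneg (by positivity) (qFactorial_pos hq k).le
  have b1 : (q ^ (k*(k-1)/2):ℝ)⁻¹ * (z ^ k / qFactorial q k) ≤ z ^ k / qFactorial q k :=
    mul_le_of_le_one_left hzk h1
  have hzw : z * q ^ (-(k:ℤ)) ≤ z := by nlinarith [abs_nonneg (a*x)]
  have b2 : (z * q ^ (-(k:ℤ))) ^ j / qFactorial q j ≤ z ^ j / qFactorial q j := by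
    gcongr
    exact (qFactorial_pos hq j).le
  exact mul_le_mul b1 b2
    (div_nonneg (by positivity) (qFactorial_pos hq j).le) hzk

lemma tsum_prod_eq_tsum_antidiagonal {F : ℕ × ℕ → ℝ} (h : Summable F) :
    ∑' p : ℕ × ℕ, F p = ∑' m, ∑ kl ∈ Finset.HasAntidiagonal.antidiagonal m, F kl := by
  conv_rhs => congr; ext m; rw [← Finset.sum_finset_coe, ← tsum_fintype (L := .unconditional _)]
  rw [← Finset.HasAntidiagonal.sigmaAntidiagonalEquivProd.tsum_eq F]
  exact Summable.tsum_sigma' (fun n => (hasSum_fintype _).summable)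
    (Finset.HasAntidiagonal.sigmaAntidiagonalEquivProd.summable_iff.mpr h)

end Core
section Core2
variable {q : ℝ}

lemma qsF_eq (hq : 1 < q) (a x : ℝ) (k j : ℕ) :
    qsF q a x (k, j) = ((-1)^(k+j) * (a*x)^(k+j) / qFactorial q (k+j)) *
      ((-1)^k * q ^ (k*(k-1)/2) * ((q ^ (k+j-1))⁻¹)^k * qBinom q (k+j) k) := by
  have hq0 : (0:ℝ) < q := by linarith
  have hnat : (k+j-1)*k = k*(k-1) + k*j := by
    cases k with
    | zero => simp
    | succ s =>
      have h1 : s + 1 + j - 1 = s + j := by omega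
      have h2 : s + 1 - 1 = s := by omega
      rw [h1, h2]
      ring
  have hpow : (q:ℝ) ^ ((k+j-1)*k) = q ^ (k*(k-1)/2) * q ^ (k*(k-1)/2) * q ^ (k*j) := by
    rw [← pow_add, ← pow_add]
    congr 1
    have := two_mul_tri k
    omega
  rw [qsF, qBinom, if_pos (Nat.le_add_right k j)]
  simp only [Nat.add_sub_cancel_left]
  rw [show (-a * q ^ (-(k:ℤ)) * x) = -(a * q ^ (-(k:ℤ)) * x) by ring, neg_pow]
  rw [mul_pow, mul_pow, zpow_neg, zpow_natCast, inv_pow, ← pow_mul]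
  rw [inv_pow, ← pow_mul, hpow]
  have f1 := (qFactorial_pos hq k).ne'
  have f2 := (qFactorial_pos hq j).ne'
  have f3 := (qFactorial_pos hq (k+j)).ne'
  have p1 : (q:ℝ) ^ (k*(k-1)/2) ≠ 0 := by positivity
  have p2 : (q:ℝ) ^ (k*j) ≠ 0 := by positivity
  field_simp
  have hsign : ((-1:ℝ))^(k+j) * (-1)^k = (-1)^j := by
    rw [pow_add]
    have h1 : ((-1:ℝ))^k * (-1)^k = 1 := by rw [← mul_pow]; norm_num
    linear_combination ((-1:ℝ))^j * h1
  have h2k : ((-1:ℝ))^(k*2) = 1 := by rw [Nat.mul_comm, pow_mul]; norm_num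
  linear_combination (-(a ^ k * a ^ j * x ^ k * x ^ j) * (-1:ℝ)^j) * h2k

lemma sum_antidiagonal_qsF (hq : 1 < q) (a x : ℝ) (m : ℕ) :
    ∑ kl ∈ Finset.HasAntidiagonal.antidiagonal m, qsF q a x kl = if m = 0 then 1 else 0 := by
  rcases m with _ | m
  · norm_num [qsF, qFactorial]
  · rw [if_neg (Nat.succ_ne_zero m)]
    have hM : 1 ≤ m + 1 := Nat.le_add_left 1 m
    rw [Finset.Nat.sum_antidiagonal_eq_sum_range_succ_mk]
    have key := sum_qBinom_eval_zero hq hM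
    calc ∑ k ∈ Finset.range (m+1+1), qsF q a x (k, m+1-k)
        = ∑ k ∈ Finset.range (m+1+1), ((-1)^(m+1) * (a*x)^(m+1) / qFactorial q (m+1)) *
            ((-1)^k * q ^ (k*(k-1)/2) * ((q ^ (m+1-1))⁻¹)^k * qBinom q (m+1) k) := by
          apply Finset.sum_congr rfl
          intro k hk
          have hkM : k ≤ m + 1 := Nat.lt_succ_iff.mp (Finset.mem_range.mp hk)
          have := qsF_eq hq a x k (m+1-k)
          rw [show k + (m+1-k) = m+1 by omega] at this
          exact this
    _ = ((-1)^(m+1) * (a*x)^(m+1) / qFactorial q (m+1)) *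
          ∑ k ∈ Finset.range (m+1+1),
            ((-1)^k * q ^ (k*(k-1)/2) * ((q ^ (m+1-1))⁻¹)^k * qBinom q (m+1) k) := by
          rw [Finset.mul_sum]
    _ = 0 := by rw [key, mul_zero]

lemma qsTerm_eq_tsum (q a x : ℝ) :
    qsTerm q a x = fun k => ∑' j, qsF q a x (k, j) := by
  funext k
  rw [qsTerm, qExp, ← tsum_mul_left]
  rfl

lemma summable_qsTerm (hq : 1 < q) (a x : ℝ) : Summable (qsTerm q a x) := by
  rw [qsTerm_eq_tsum]
  exact (summable_qsF hq a x).prod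

lemma tsum_qsTerm (hq : 1 < q) (a x : ℝ) : ∑' k, qsTerm q a x k = 1 := by
  have hF := summable_qsF hq a x
  rw [qsTerm_eq_tsum, ← Summable.tsum_prod hF, tsum_prod_eq_tsum_antidiagonal hF]
  simp only [sum_antidiagonal_qsF hq a x]
  rw [tsum_ite_eq]

end Core2

section Final
variable {q : ℝ}

lemma qNat_zero : qNat q 0 = 0 := by simp [qNat]

lemma qsTerm_shift (hq : 1 < q) (a x : ℝ) (k : ℕ) :
    qNat q (k+1) * qsTerm q a x (k+1) = (a * x) * qsTerm q (a/q) x k := by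
  have hq0 : (0:ℝ) < q := by linarith
  have harg : -a * q ^ (-((k+1:ℕ):ℤ)) * x = -(a/q) * q ^ (-(k:ℤ)) * x := by
    rw [show (-((k+1:ℕ):ℤ)) = -(k:ℤ) + (-1) by push_cast; ring,
      zpow_add₀ (ne_of_gt hq0), zpow_neg_one]
    field_simp
  rw [qsTerm, qsTerm, harg, qFactorial_succ, tri_succ, pow_add, div_pow]
  have f1 := (qFactorial_pos hq k).ne'
  have f2 := (qNat_pos hq k.succ_pos).ne'
  have p1 : (q:ℝ) ^ (k*(k-1)/2) ≠ 0 := by positivity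
  have p2 : (q:ℝ) ^ k ≠ 0 := by positivity
  field_simp
  ring


lemma qSzasz_eq_tsum_qsTerm (q : ℝ) (n : ℕ) (f : ℝ → ℝ) (x : ℝ) :
    qSzasz q n f x = ∑' k, f (qNat q k / qNat q n) * qsTerm q (qNat q n) x k := rfl

end Final

/-- `M_{n,q}(t;x) = x` and `M_{n,q}(t²;x) = x² + x/[n]_q`. -/
theorem qSzasz_moments_one_two (q : ℝ) (hq : 1 < q) (n : ℕ) (hn : 1 ≤ n)
    (x : ℝ) (hx : 0 ≤ x) :
    qSzasz q n (fun t => t) x = x ∧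
      qSzasz q n (fun t => t ^ 2) x = x ^ 2 + x / qNat q n := by
  have hq0 : (0:ℝ) < q := by linarith
  set a := qNat q n with ha
  have hapos : 0 < a := qNat_pos hq (by omega)
  have hTone : ∀ b : ℝ, ∑' k, qsTerm q b x k = 1 := fun b => tsum_qsTerm hq b x
  have hTsum : ∀ b : ℝ, Summable (qsTerm q b x) := fun b => summable_qsTerm hq b x
  constructor
  · rw [qSzasz_eq_tsum_qsTerm]
    simp only [← ha]
    have hsh : ∀ k : ℕ, (qNat q (k+1) / a) * qsTerm q a x (k+1)
        = x * qsTerm q (a/q) x k := by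
      intro k
      rw [div_mul_eq_mul_div, qsTerm_shift hq a x k]
      field_simp
    have hsg : Summable (fun k => (qNat q k / a) * qsTerm q a x k) := by
      rw [← summable_nat_add_iff 1]
      exact Summable.congr ((hTsum (a/q)).mul_left x) (fun k => (hsh k).symm)
    rw [Summable.tsum_eq_zero_add hsg]
    simp only [hsh, qNat_zero, zero_div, zero_mul, zero_add]
    rw [tsum_mul_left, hTone, mul_one]
  · rw [qSzasz_eq_tsum_qsTerm]
    simp only [← ha]
    -- the weight function w k = [k]_q * qsTerm q (a/q) x k
    have hwsh : ∀ k : ℕ, qNat q (k+1) * qsTerm q (a/q) x (k+1)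
        = ((a/q) * x) * qsTerm q ((a/q)/q) x k := qsTerm_shift hq (a/q) x
    have hws : Summable (fun k => qNat q k * qsTerm q (a/q) x k) := by
      rw [← summable_nat_add_iff 1]
      exact Summable.congr ((hTsum ((a/q)/q)).mul_left ((a/q) * x)) (fun k => (hwsh k).symm)
    have hwt : ∑' k, qNat q k * qsTerm q (a/q) x k = (a/q) * x := by
      rw [Summable.tsum_eq_zero_add hws]
      simp only [hwsh, qNat_zero, zero_mul, zero_add]
      rw [tsum_mul_left, hTone, mul_one]
    have hsh2 : ∀ k : ℕ, (qNat q (k+1) / a)^2 * qsTerm q a x (k+1)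
        = (x/a) * qsTerm q (a/q) x k + (q*x/a) * (qNat q k * qsTerm q (a/q) x k) := by
      intro k
      have h1 := qsTerm_shift hq a x k
      have h2 := qNat_succ hq k
      calc (qNat q (k+1) / a)^2 * qsTerm q a x (k+1)
          = (qNat q (k+1) / a^2) * (qNat q (k+1) * qsTerm q a x (k+1)) := by ring
        _ = (qNat q (k+1) / a^2) * (a * x * qsTerm q (a/q) x k) := by rw [h1]
        _ = ((q * qNat q k + 1) / a^2) * (a * x * qsTerm q (a/q) x k) := by rw [← h2]
        _ = (x/a) * qsTerm q (a/q) x k + (q*x/a) * (qNat q k * qsTerm q (a/q) x k) := by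
            field_simp
            ring
    have s1 : Summable (fun k => (x/a) * qsTerm q (a/q) x k) := (hTsum (a/q)).mul_left _
    have s2 : Summable (fun k => (q*x/a) * (qNat q k * qsTerm q (a/q) x k)) := hws.mul_left _
    have hsg2 : Summable (fun k => (qNat q k / a)^2 * qsTerm q a x k) := by
      rw [← summable_nat_add_iff 1]
      exact Summable.congr (s1.add s2) (fun k => (hsh2 k).symm)
    rw [Summable.tsum_eq_zero_add hsg2]
    simp only [hsh2, qNat_zero, zero_div, zero_mul, zero_add]
    rw [Summable.tsum_add s1 s2, tsum_mul_left, tsum_mul_left, hTone, hwt]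
    field_simp
    ring
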